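/- The Besov capacity is an outer capacity: for every $E \subset X$, $C_{p,q}^s(E) = \inf\{C_{p,q}^s(U) : U \supset E,\ U \text{ open}\}$. -/

import Mathlib

open MeasureTheory ENNReal

variable {X : Type*} [MetricSpace X] [MeasurableSpace X] [OpensMeasurableSpace X]

/-- `(g k)` is a fractional `s`-gradient of `u`. -/
def IsFracGrad (μ : Measure X) (s : ℝ) (u : X → ℝ) (g : ℤ → X → ℝ≥0∞) : Prop :=
  (∀ k, Measurable (g k)) ∧
  ∃ E : Set X, μ E = 0 ∧ ∀ k : ℤ, ∀ x ∉ E, ∀ y ∉ E,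
    (2 : ℝ) ^ (-k - 1) ≤ dist x y → dist x y < (2 : ℝ) ^ (-k) →
      ENNReal.ofReal |u x - u y| ≤ ENNReal.ofReal (dist x y ^ s) * (g k x + g k y)

/-- The `ℓ^q`-norm of a sequence of extended nonnegative reals. -/
noncomputable def ellq (q : ℝ≥0∞) (a : ℤ → ℝ≥0∞) : ℝ≥0∞ :=
  if q = ∞ then ⨆ k, a k else (∑' k, a k ^ q.toReal) ^ (1 / q.toReal)

/-- The `L^p`-norm of an `ℝ≥0∞`-valued function. -/
noncomputable def lpNormE (μ : Measure X) (p : ℝ≥0∞) (f : X → ℝ≥0∞) : ℝ≥0∞ :=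
  if p = ∞ then essSup f μ else (∫⁻ x, f x ^ p.toReal ∂μ) ^ (1 / p.toReal)

/-- The homogeneous Hajłasz–Besov seminorm. -/
noncomputable def besovSemi (μ : Measure X) (s : ℝ) (p q : ℝ≥0∞) (u : X → ℝ) : ℝ≥0∞ :=
  ⨅ (g : ℤ → X → ℝ≥0∞) (_ : IsFracGrad μ s u g), ellq q fun k => lpNormE μ p (g k)

/-- The Hajłasz–Besov (quasi)norm `‖u‖_{L^p} + ‖u‖_{Ṅ^s_{p,q}}`. -/
noncomputable def besovNorm (μ : Measure X) (s : ℝ) (p q : ℝ≥0∞) (u : X → ℝ) : ℝ≥0∞ :=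
  eLpNorm u p μ + besovSemi μ s p q u

/-- `u` belongs to the Hajłasz–Besov space `N^s_{p,q}(X)`. -/
def MemBesov (μ : Measure X) (s : ℝ) (p q : ℝ≥0∞) (u : X → ℝ) : Prop :=
  MemLp u p μ ∧ besovNorm μ s p q u < ⊤

/-- `u` is admissible for the Besov capacity of `E`:
`u ∈ N^s_{p,q}(X)` and `u ≥ 1` on a neighbourhood of `E`. -/
def BesovAdmissible (μ : Measure X) (s : ℝ) (p q : ℝ≥0∞) (E : Set X) (u : X → ℝ) : Prop :=
  MemBesov μ s p q u ∧ ∃ U : Set X, IsOpen U ∧ E ⊆ U ∧ ∀ x ∈ U, 1 ≤ u x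

/-- The Besov capacity `C^s_{p,q}(E)`. -/
noncomputable def besovCapacity (μ : Measure X) (s : ℝ) (p q : ℝ≥0∞) (E : Set X) : ℝ≥0∞ :=
  ⨅ (u : X → ℝ) (_ : BesovAdmissible μ s p q E u), besovNorm μ s p q u ^ p.toReal

theorem besovCapacity_outer (μ : Measure X) [IsUnifLocDoublingMeasure μ]
    (s : ℝ) (hs : 0 < s) (p q : ℝ≥0∞) (hp : 0 < p) (hq : 0 < q) (E : Set X) :
    besovCapacity μ s p q E =
      ⨅ (U : Set X) (_ : IsOpen U ∧ E ⊆ U), besovCapacity μ s p q U := by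
  apply le_antisymm
  · refine le_iInf₂ fun U hU => ?_
    refine le_iInf₂ fun u hu => ?_
    refine iInf₂_le u ⟨hu.1, ?_⟩
    obtain ⟨V, hV, hUV, hV1⟩ := hu.2
    exact ⟨V, hV, hU.2.trans hUV, hV1⟩
  · refine le_iInf₂ fun u hu => ?_
    obtain ⟨hmem, V, hV, hEV, hV1⟩ := hu
    refine (iInf₂_le V ⟨hV, hEV⟩).trans ?_
    exact iInf₂_le u ⟨hmem, V, hV, subset_rfl, hV1⟩
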